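/- Let G be a group acting by isometries on a geodesic metric space X, let e ∈ X, g ∈ G, and let N be a Morse gauge. Then there exists a Morse gauge N', depending only on N, g, and d(g·e, e), such that every point of X connected to g·e by an N-Morse geodesic is connected to e by an N'-Morse geodesic; i.e., X_{g·e}^{(N)} ⊆ X_e^{(N')}. -/
import Mathlib


open Set Metric Filter

/-- A map is a geodesic on the interval `I`: distances equal parameter differences. -/
def IsGeodesicOn {X : Type*} [MetricSpace X] (γ : ℝ → X) (I : Set ℝ) : Prop :=
  ∀ s ∈ I, ∀ t ∈ I, dist (γ s) (γ t) = |s - t|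

/-- A `(K,C)`-quasigeodesic on the interval `I`. -/
def IsQuasigeodesicOn {X : Type*} [MetricSpace X] (K C : ℝ) (q : ℝ → X) (I : Set ℝ) : Prop :=
  ∀ s ∈ I, ∀ t ∈ I,
    (1 / K) * |s - t| - C ≤ dist (q s) (q t) ∧ dist (q s) (q t) ≤ K * |s - t| + C

/-- The closed `r`-neighborhood of a subset. -/
def nbhd {X : Type*} [MetricSpace X] (A : Set X) (r : ℝ) : Set X :=
  {x | ∃ y ∈ A, dist x y ≤ r}

/-- A path `γ` (on domain `I`) is `N`-Morse: every `(K,C)`-quasigeodesic with endpoints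
on `γ` lies in the `N K C`-neighborhood of `γ`. -/
def IsMorseOn {X : Type*} [MetricSpace X] (N : ℝ → ℝ → ℝ) (γ : ℝ → X) (I : Set ℝ) : Prop :=
  ∀ K C : ℝ, 1 ≤ K → 0 ≤ C → ∀ (q : ℝ → X) (a b : ℝ), a ≤ b →
    IsQuasigeodesicOn K C q (Icc a b) → q a ∈ γ '' I → q b ∈ γ '' I →
    q '' Icc a b ⊆ nbhd (γ '' I) (N K C)

/-- A Morse gauge takes nonnegative values. -/
def MorseGauge (N : ℝ → ℝ → ℝ) : Prop := ∀ K C : ℝ, 1 ≤ K → 0 ≤ C → 0 ≤ N K C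

/-- A geodesic metric space: any two points are joined by a geodesic. -/
def GeodesicSpace (X : Type*) [MetricSpace X] : Prop :=
  ∀ x y : X, ∃ γ : ℝ → X, IsGeodesicOn γ (Icc 0 (dist x y)) ∧ γ 0 = x ∧ γ (dist x y) = y

/-- The set of points joined to `p` by an N-Morse geodesic. -/
def stratum {X : Type*} [MetricSpace X] (N : ℝ → ℝ → ℝ) (p : X) : Set X :=
  {y | ∃ (γ : ℝ → X) (L : ℝ), 0 ≤ L ∧ IsGeodesicOn γ (Icc 0 L) ∧
    γ 0 = p ∧ γ L = y ∧ IsMorseOn N γ (Icc 0 L)}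

/-- To check the quasigeodesic property it suffices to consider ordered pairs. -/
lemma qg_of_le {X : Type*} [MetricSpace X] {K C : ℝ} {q : ℝ → X} {I : Set ℝ}
    (h : ∀ s ∈ I, ∀ t ∈ I, s ≤ t →
      (1 / K) * (t - s) - C ≤ dist (q s) (q t) ∧ dist (q s) (q t) ≤ K * (t - s) + C) :
    IsQuasigeodesicOn K C q I := by
  intro s hs t ht
  rcases le_total s t with hst | hst
  · rw [abs_of_nonpos (by linarith : s - t ≤ 0), neg_sub]
    exact h s hs t ht hst
  · rw [abs_of_nonneg (by linarith : 0 ≤ s - t), dist_comm]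
    exact h t ht s hs hst

/-- change of basepoint for Morse strata: if G acts by isometries, then for
every gauge N and g ∈ G there is a gauge N' (depending only on N, g and d(g·e,e)) with
X_{g·e}^{(N)} ⊆ X_e^{(N')}. -/
theorem stmt14 {X : Type*} [MetricSpace X] (hX : GeodesicSpace X)
    {G : Type*} [Group G] [MulAction G X]
    (hiso : ∀ (g : G) (x y : X), dist (g • x) (g • y) = dist x y)
    (e : X) (g : G) (N : ℝ → ℝ → ℝ) (hN : MorseGauge N) :
    ∃ N' : ℝ → ℝ → ℝ, MorseGauge N' ∧ stratum N (g • e) ⊆ stratum N' e := by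
  have hD : (0 : ℝ) ≤ dist (g • e) e := dist_nonneg
  have hM : (0 : ℝ) ≤ N 1 (2 * dist (g • e) e) := hN 1 _ le_rfl (by linarith)
  refine ⟨fun K C => N K (C + 2 * N 1 (2 * dist (g • e) e) + 2) +
      (3 * N 1 (2 * dist (g • e) e) + dist (g • e) e), ?_, ?_⟩
  · intro K C hK hC
    have := hN K (C + 2 * N 1 (2 * dist (g • e) e) + 2) hK (by linarith)
    show 0 ≤ N K (C + 2 * N 1 (2 * dist (g • e) e) + 2) +
      (3 * N 1 (2 * dist (g • e) e) + dist (g • e) e)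
    linarith
  intro y hy
  obtain ⟨α, Lα, hLα0, hαgeo, hα0, hαL, hαM⟩ := hy
  obtain ⟨η, hηgeo, hη0, hηD⟩ := hX (g • e) e
  obtain ⟨β, hβgeo, hβ0, hβL⟩ := hX e y
  set D : ℝ := dist (g • e) e with hDdef
  set L : ℝ := dist e y with hLdef
  set M : ℝ := N 1 (2 * D) with hMdef
  have hL : (0 : ℝ) ≤ L := dist_nonneg
  -- the concatenated path from g•e through e to y
  set q : ℝ → X := fun t => if t ≤ 0 then η (t + D) else β t with hqdef
  have hqβ : ∀ s ∈ Icc (0 : ℝ) L, q s = β s := by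
    intro s hs
    by_cases h : s ≤ 0
    · have hs0 : s = 0 := le_antisymm h hs.1
      simp only [hqdef, hs0, if_pos le_rfl, zero_add, hηD, ← hβ0]
    · simp only [hqdef, if_neg h]
  have hqηval : ∀ s : ℝ, s ≤ 0 → q s = η (s + D) := by
    intro s hs; simp only [hqdef, if_pos hs]
  have hqnegD : q (-D) = g • e := by
    rw [hqηval (-D) (by linarith), neg_add_cancel, hη0]
  have hq_bound : ∀ s ∈ Icc (-D) L, ∀ t ∈ Icc (-D) L, s ≤ t →
      t - s - 2 * D ≤ dist (q s) (q t) ∧ dist (q s) (q t) ≤ t - s := by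
    intro s hs t ht hst
    by_cases hs0 : s ≤ 0
    · by_cases ht0 : t ≤ 0
      · rw [hqηval s hs0, hqηval t ht0]
        have := hηgeo (s + D) ⟨by linarith [hs.1], by linarith⟩
          (t + D) ⟨by linarith [ht.1], by linarith⟩
        rw [this, abs_of_nonpos (by linarith : s + D - (t + D) ≤ 0)]
        constructor <;> linarith
      · push_neg at ht0
        rw [hqηval s hs0, hqβ t ⟨le_of_lt ht0, ht.2⟩]
        have hse : dist (η (s + D)) e = -s := by
          have := hηgeo (s + D) ⟨by linarith [hs.1], by linarith⟩ D ⟨hD, le_rfl⟩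
          rw [hηD] at this
          rw [this, abs_of_nonpos (by linarith : s + D - D ≤ 0)]
          ring
        have hte : dist e (β t) = t := by
          have := hβgeo 0 ⟨le_rfl, hL⟩ t ⟨le_of_lt ht0, ht.2⟩
          rw [hβ0] at this
          rw [this, abs_of_nonpos (by linarith : (0 : ℝ) - t ≤ 0)]
          ring
        constructor
        · have h1 : dist e (β t) ≤ dist e (η (s + D)) + dist (η (s + D)) (β t) :=
            dist_triangle _ _ _
          rw [dist_comm e (η (s + D))] at h1
          have hsD : -D ≤ s := hs.1
          rw [hse, hte] at h1
          linarith
        · have h1 : dist (η (s + D)) (β t) ≤ dist (η (s + D)) e + dist e (β t) :=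
            dist_triangle _ _ _
          rw [hse, hte] at h1
          linarith
    · push_neg at hs0
      rw [hqβ s ⟨le_of_lt hs0, hs.2⟩, hqβ t ⟨by linarith, ht.2⟩]
      have := hβgeo s ⟨le_of_lt hs0, hs.2⟩ t ⟨by linarith, ht.2⟩
      rw [this, abs_of_nonpos (by linarith : s - t ≤ 0)]
      constructor <;> linarith
  have hq_qg : IsQuasigeodesicOn 1 (2 * D) q (Icc (-D) L) := by
    apply qg_of_le
    intro s hs t ht hst
    have := hq_bound s hs t ht hst
    constructor
    · calc (1 / 1) * (t - s) - 2 * D = t - s - 2 * D := by ring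
      _ ≤ dist (q s) (q t) := this.1
    · calc dist (q s) (q t) ≤ t - s := this.2
      _ ≤ 1 * (t - s) + 2 * D := by linarith
  -- apply the Morse property of α to q
  have hqend0 : q (-D) ∈ α '' Icc 0 Lα := ⟨0, ⟨le_rfl, hLα0⟩, by rw [hα0, hqnegD]⟩
  have hqend1 : q L ∈ α '' Icc 0 Lα :=
    ⟨Lα, ⟨hLα0, le_rfl⟩, by rw [hαL, hqβ L ⟨hL, le_rfl⟩, hβL]⟩
  have hqnb : q '' Icc (-D) L ⊆ nbhd (α '' Icc 0 Lα) M :=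
    hαM 1 (2 * D) le_rfl (by linarith) q (-D) L (by linarith) hq_qg hqend0 hqend1
  -- continuity
  have hαcont : ContinuousOn α (Icc 0 Lα) := by
    refine (LipschitzOnWith.mk_one fun x hx z hz => ?_).continuousOn
    rw [hαgeo x hx z hz, Real.dist_eq]
  have hqcont : ContinuousOn q (Icc (-D) L) := by
    refine (LipschitzOnWith.mk_one fun x hx z hz => ?_).continuousOn
    rcases le_total x z with h | h
    · rw [Real.dist_eq, abs_of_nonpos (by linarith : x - z ≤ 0)]
      linarith [(hq_bound x hx z hz h).2]
    · rw [Real.dist_eq, abs_of_nonneg (by linarith : 0 ≤ x - z), dist_comm]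
      linarith [(hq_bound z hz x hx h).2]
  -- Claim A: every point of α is within 3M + D of β
  have hA : ∀ u ∈ Icc (0 : ℝ) Lα, ∃ z ∈ β '' Icc 0 L, dist (α u) z ≤ 3 * M + D := by
    intro u hu
    have hc₁ : IsCompact (α '' Icc 0 u) :=
      isCompact_Icc.image_of_continuousOn (hαcont.mono (Icc_subset_Icc le_rfl hu.2))
    have hc₂ : IsCompact (α '' Icc u Lα) :=
      isCompact_Icc.image_of_continuousOn (hαcont.mono (Icc_subset_Icc hu.1 le_rfl))
    have hne₁ : (α '' Icc 0 u).Nonempty := ⟨α 0, 0, ⟨le_rfl, hu.1⟩, rfl⟩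
    have hne₂ : (α '' Icc u Lα).Nonempty := ⟨α u, u, ⟨le_rfl, hu.2⟩, rfl⟩
    set f : ℝ → ℝ := fun t => infDist (q t) (α '' Icc 0 u) - infDist (q t) (α '' Icc u Lα)
      with hfdef
    have hfcont : ContinuousOn f (Icc (-D) L) :=
      (((continuous_infDist_pt (α '' Icc 0 u)).comp_continuousOn hqcont).sub
        ((continuous_infDist_pt (α '' Icc u Lα)).comp_continuousOn hqcont))
    have hf0 : f (-D) ≤ 0 := by
      have h1 : infDist (q (-D)) (α '' Icc 0 u) = 0 := by
        rw [hqnegD, ← hα0]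
        exact infDist_zero_of_mem ⟨0, ⟨le_rfl, hu.1⟩, rfl⟩
      have h2 : 0 ≤ infDist (q (-D)) (α '' Icc u Lα) := infDist_nonneg
      simp only [hfdef]; linarith
    have hf1 : 0 ≤ f L := by
      have h1 : infDist (q L) (α '' Icc u Lα) = 0 := by
        rw [hqβ L ⟨hL, le_rfl⟩, hβL, ← hαL]
        exact infDist_zero_of_mem ⟨Lα, ⟨hu.2, le_rfl⟩, rfl⟩
      have h2 : 0 ≤ infDist (q L) (α '' Icc 0 u) := infDist_nonneg
      simp only [hfdef]; linarith
    obtain ⟨t, ht, hft⟩ := intermediate_value_Icc (by linarith : -D ≤ L) hfcont ⟨hf0, hf1⟩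
    -- q t is within M of α
    obtain ⟨w, hwA, hwd⟩ := hqnb (mem_image_of_mem q ht)
    obtain ⟨v, hv, rfl⟩ := hwA
    have hboth : infDist (q t) (α '' Icc 0 u) ≤ M ∧ infDist (q t) (α '' Icc u Lα) ≤ M := by
      have heq : infDist (q t) (α '' Icc 0 u) = infDist (q t) (α '' Icc u Lα) := by
        have : f t = 0 := hft
        simp only [hfdef] at this; linarith
      rcases le_total v u with h | h
      · have h1 : infDist (q t) (α '' Icc 0 u) ≤ dist (q t) (α v) :=
          infDist_le_dist_of_mem ⟨v, ⟨hv.1, h⟩, rfl⟩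
        exact ⟨h1.trans hwd, by linarith [h1.trans hwd]⟩
      · have h1 : infDist (q t) (α '' Icc u Lα) ≤ dist (q t) (α v) :=
          infDist_le_dist_of_mem ⟨v, ⟨h, hv.2⟩, rfl⟩
        exact ⟨by linarith [h1.trans hwd], h1.trans hwd⟩
    obtain ⟨x₁, hx₁, he₁⟩ := hc₁.exists_infDist_eq_dist hne₁ (q t)
    obtain ⟨x₂, hx₂, he₂⟩ := hc₂.exists_infDist_eq_dist hne₂ (q t)
    obtain ⟨v₁, hv₁, rfl⟩ := hx₁
    obtain ⟨v₂, hv₂, rfl⟩ := hx₂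
    have hd1 : dist (q t) (α v₁) ≤ M := by rw [← he₁]; exact hboth.1
    have hd2 : dist (q t) (α v₂) ≤ M := by rw [← he₂]; exact hboth.2
    have hduv1 : dist (α u) (α v₁) = u - v₁ := by
      rw [hαgeo u hu v₁ ⟨hv₁.1, hv₁.2.trans hu.2⟩,
        abs_of_nonneg (by linarith [hv₁.2] : (0 : ℝ) ≤ u - v₁)]
    have hd12 : dist (α v₁) (α v₂) = v₂ - v₁ := by
      rw [hαgeo v₁ ⟨hv₁.1, hv₁.2.trans hu.2⟩ v₂ ⟨hu.1.trans hv₂.1, hv₂.2⟩,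
        abs_of_nonpos (by linarith [hv₁.2, hv₂.1] : v₁ - v₂ ≤ 0)]
      ring
    have hv2v1 : v₂ - v₁ ≤ 2 * M := by
      have h1 := dist_triangle (α v₁) (q t) (α v₂)
      rw [dist_comm (α v₁) (q t), hd12] at h1
      linarith
    have hqt : dist (α u) (q t) ≤ 3 * M := by
      have h1 := dist_triangle (α u) (α v₁) (q t)
      rw [hduv1, dist_comm (α v₁) (q t)] at h1
      have hu1 : u - v₁ ≤ v₂ - v₁ := by linarith [hv₂.1]
      linarith
    by_cases ht0 : t ≤ 0
    · refine ⟨β 0, mem_image_of_mem β ⟨le_rfl, hL⟩, ?_⟩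
      have hqb : dist (q t) (β 0) ≤ D := by
        rw [hqηval t ht0, hβ0, ← hηD]
        rw [hηgeo (t + D) ⟨by linarith [ht.1], by linarith⟩ D ⟨hD, le_rfl⟩,
          abs_of_nonpos (by linarith : t + D - D ≤ 0)]
        linarith [ht.1]
      calc dist (α u) (β 0) ≤ dist (α u) (q t) + dist (q t) (β 0) := dist_triangle _ _ _
        _ ≤ 3 * M + D := by linarith
    · push_neg at ht0
      refine ⟨β t, mem_image_of_mem β ⟨le_of_lt ht0, ht.2⟩, ?_⟩
      rw [← hqβ t ⟨le_of_lt ht0, ht.2⟩]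
      linarith
  -- the geodesic β is N'-Morse
  refine ⟨β, L, hL, hβgeo, hβ0, hβL, ?_⟩
  intro K C hK hC σ a b hab hσqg hσa hσb
  have hK0 : (0 : ℝ) < K := lt_of_lt_of_le one_pos hK
  have hKinv1 : 1 / K ≤ 1 := by rw [div_le_one hK0]; exact hK
  have hKinv0 : 0 < 1 / K := by positivity
  obtain ⟨s₀, hs₀, hσa'⟩ := hσa
  obtain ⟨s₁, hs₁, hσb'⟩ := hσb
  -- endpoints of σ are within M of α
  have hnear : ∀ s ∈ Icc (0 : ℝ) L, ∃ u ∈ Icc (0 : ℝ) Lα, dist (β s) (α u) ≤ M := by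
    intro s hs
    have hmem : q s ∈ q '' Icc (-D) L := mem_image_of_mem q ⟨by linarith [hs.1], hs.2⟩
    obtain ⟨w, hwA, hwd⟩ := hqnb hmem
    obtain ⟨u, hu, rfl⟩ := hwA
    rw [hqβ s hs] at hwd
    exact ⟨u, hu, hwd⟩
  obtain ⟨u₀, hu₀, hd₀⟩ := hnear s₀ hs₀
  obtain ⟨u₁, hu₁, hd₁⟩ := hnear s₁ hs₁
  rw [hσa'] at hd₀
  rw [hσb'] at hd₁
  -- extend σ to a quasigeodesic with endpoints on α
  set σ' : ℝ → X := fun t => if t < a then α u₀ else if t ≤ b then σ t else α u₁ with hσ'def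
  have hσ'L : ∀ t : ℝ, t < a → σ' t = α u₀ := fun t ht => by
    simp only [hσ'def, if_pos ht]
  have hσ'M : ∀ t : ℝ, a ≤ t → t ≤ b → σ' t = σ t := fun t ht1 ht2 => by
    simp only [hσ'def, if_neg (not_lt.mpr ht1), if_pos ht2]
  have hσ'R : ∀ t : ℝ, b < t → σ' t = α u₁ := fun t ht => by
    simp only [hσ'def, if_neg (not_lt.mpr (hab.trans ht.le)), if_neg (not_le.mpr ht)]
  have hσ'qg : IsQuasigeodesicOn K (C + 2 * M + 2) σ' (Icc (a - 1) (b + 1)) := by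
    apply qg_of_le
    intro s hs t ht hst
    have hinvle : ∀ x : ℝ, 0 ≤ x → x ≤ 2 → (1 / K) * x ≤ 2 := by
      intro x hx1 hx2
      nlinarith
    by_cases hsa : s < a
    · by_cases hta : t < a
      · rw [hσ'L s hsa, hσ'L t hta, dist_self]
        constructor
        · have h1 : (1 / K) * (t - s) ≤ 2 := hinvle _ (by linarith) (by linarith [hs.1])
          linarith
        · nlinarith
      · push_neg at hta
        by_cases htb : t ≤ b
        · -- left & middle
          rw [hσ'L s hsa, hσ'M t hta htb]
          have hb := hσqg a ⟨le_rfl, hab⟩ t ⟨hta, htb⟩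
          rw [abs_of_nonpos (by linarith : a - t ≤ 0), neg_sub] at hb
          have htri1 : dist (α u₀) (σ t) ≤ dist (α u₀) (σ a) + dist (σ a) (σ t) :=
            dist_triangle _ _ _
          have htri2 : dist (σ a) (σ t) ≤ dist (σ a) (α u₀) + dist (α u₀) (σ t) :=
            dist_triangle _ _ _
          rw [dist_comm (α u₀) (σ a)] at htri1
          constructor
          · have h1 : (1 / K) * (t - s) - (1 / K) * (t - a) ≤ 2 := by
              have : (1 / K) * (t - s) - (1 / K) * (t - a) = (1 / K) * (a - s) := by ring
              rw [this]
              exact hinvle _ (by linarith) (by linarith [hs.1])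
            linarith [hb.1]
          · have h1 : K * (t - a) ≤ K * (t - s) :=
              mul_le_mul_of_nonneg_left (by linarith) hK0.le
            linarith [hb.2]
        · -- left & right
          push_neg at htb
          rw [hσ'L s hsa, hσ'R t htb]
          have hb := hσqg a ⟨le_rfl, hab⟩ b ⟨hab, le_rfl⟩
          rw [abs_of_nonpos (by linarith : a - b ≤ 0), neg_sub] at hb
          have htri1 : dist (α u₀) (α u₁) ≤ dist (α u₀) (σ a) + dist (σ a) (α u₁) :=
            dist_triangle _ _ _
          have htri1' : dist (σ a) (α u₁) ≤ dist (σ a) (σ b) + dist (σ b) (α u₁) :=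
            dist_triangle _ _ _
          have htri2 : dist (σ a) (σ b) ≤ dist (σ a) (α u₀) + dist (α u₀) (σ b) :=
            dist_triangle _ _ _
          have htri2' : dist (α u₀) (σ b) ≤ dist (α u₀) (α u₁) + dist (α u₁) (σ b) :=
            dist_triangle _ _ _
          rw [dist_comm (α u₀) (σ a)] at htri1
          rw [dist_comm (α u₁) (σ b)] at htri2'
          constructor
          · have h1 : (1 / K) * (t - s) - (1 / K) * (b - a) ≤ 2 := by
              have : (1 / K) * (t - s) - (1 / K) * (b - a)
                  = (1 / K) * ((t - b) + (a - s)) := by ring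
              rw [this]
              exact hinvle _ (by linarith) (by linarith [hs.1, ht.2])
            linarith [hb.1]
          · have h1 : K * (b - a) ≤ K * (t - s) :=
              mul_le_mul_of_nonneg_left (by linarith) hK0.le
            linarith [hb.2]
    · push_neg at hsa
      have hta : ¬ t < a := not_lt.mpr (hsa.trans hst)
      push_neg at hta
      by_cases hsb : s ≤ b
      · by_cases htb : t ≤ b
        · -- both middle
          rw [hσ'M s hsa hsb, hσ'M t hta htb]
          have hb := hσqg s ⟨hsa, hsb⟩ t ⟨hta, htb⟩
          rw [abs_of_nonpos (by linarith : s - t ≤ 0), neg_sub] at hb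
          constructor <;> [linarith [hb.1]; linarith [hb.2]]
        · -- middle & right
          push_neg at htb
          rw [hσ'M s hsa hsb, hσ'R t htb]
          have hb := hσqg s ⟨hsa, hsb⟩ b ⟨hab, le_rfl⟩
          rw [abs_of_nonpos (by linarith : s - b ≤ 0), neg_sub] at hb
          have htri1 : dist (σ s) (α u₁) ≤ dist (σ s) (σ b) + dist (σ b) (α u₁) :=
            dist_triangle _ _ _
          have htri2 : dist (σ s) (σ b) ≤ dist (σ s) (α u₁) + dist (α u₁) (σ b) :=
            dist_triangle _ _ _
          rw [dist_comm (α u₁) (σ b)] at htri2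
          constructor
          · have h1 : (1 / K) * (t - s) - (1 / K) * (b - s) ≤ 2 := by
              have : (1 / K) * (t - s) - (1 / K) * (b - s) = (1 / K) * (t - b) := by ring
              rw [this]
              exact hinvle _ (by linarith) (by linarith [ht.2])
            linarith [hb.1]
          · have h1 : K * (b - s) ≤ K * (t - s) :=
              mul_le_mul_of_nonneg_left (by linarith) hK0.le
            linarith [hb.2]
      · -- both right
        push_neg at hsb
        rw [hσ'R s hsb, hσ'R t (hsb.trans_le hst), dist_self]
        constructor
        · have h1 : (1 / K) * (t - s) ≤ 2 := hinvle _ (by linarith) (by linarith [ht.2])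
          linarith
        · nlinarith
  have hend₀ : σ' (a - 1) ∈ α '' Icc 0 Lα :=
    ⟨u₀, hu₀, (hσ'L (a - 1) (by linarith)).symm⟩
  have hend₁ : σ' (b + 1) ∈ α '' Icc 0 Lα :=
    ⟨u₁, hu₁, (hσ'R (b + 1) (by linarith)).symm⟩
  have hnb2 := hαM K (C + 2 * M + 2) hK (by linarith) σ' (a - 1) (b + 1) (by linarith)
    hσ'qg hend₀ hend₁
  intro x hx
  obtain ⟨t, ht, rfl⟩ := hx
  have hts : σ t = σ' t := (hσ'M t ht.1 ht.2).symm
  have hmem : σ' t ∈ σ' '' Icc (a - 1) (b + 1) :=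
    mem_image_of_mem σ' ⟨by linarith [ht.1], by linarith [ht.2]⟩
  obtain ⟨w, hwA, hwd⟩ := hnb2 hmem
  obtain ⟨v, hv, rfl⟩ := hwA
  obtain ⟨z, hz, hzd⟩ := hA v hv
  refine ⟨z, hz, ?_⟩
  rw [hts]
  calc dist (σ' t) z ≤ dist (σ' t) (α v) + dist (α v) z := dist_triangle _ _ _
    _ ≤ N K (C + 2 * M + 2) + (3 * M + D) := add_le_add hwd hzd
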